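/- The function H(z) = e^{-z} - 1 + z on [0, +∞) is convex and strictly increasing on (0,+∞), and satisfies min{1, t²}·H(z) ≤ H(tz) ≤ max{1, t²}·H(z) for all z ≥ 0 and t > 0. -/

import Mathlib

open Real Set

private lemma Hderiv (z : ℝ) :
    HasDerivAt (fun z => Real.exp (-z) - 1 + z) (1 - Real.exp (-z)) z := by
  have h1 : HasDerivAt (fun z : ℝ => Real.exp (-z)) (-Real.exp (-z)) z := by
    exact ((Real.hasDerivAt_exp (-z)).comp z (hasDerivAt_neg z)).congr_deriv (by ring)
  have h2 := (h1.sub_const 1).add (hasDerivAt_id z)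
  exact h2.congr_deriv (by ring)

private lemma Hcont : Continuous (fun z : ℝ => Real.exp (-z) - 1 + z) := by
  continuity

private lemma Hnonneg (z : ℝ) : 0 ≤ Real.exp (-z) - 1 + z := by
  nlinarith [Real.add_one_le_exp (-z)]

private lemma Hmono : MonotoneOn (fun z => Real.exp (-z) - 1 + z) (Ici (0:ℝ)) := by
  apply monotoneOn_of_deriv_nonneg (convex_Ici 0) Hcont.continuousOn
  · intro x _
    exact (Hderiv x).differentiableAt.differentiableWithinAt
  · intro x hx
    rw [interior_Ici] at hx
    rw [(Hderiv x).deriv]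
    have : Real.exp (-x) ≤ 1 := by
      rw [Real.exp_le_one_iff]; linarith [mem_Ioi.mp hx]
    linarith

private lemma phi_nonneg (z : ℝ) (hz : 0 ≤ z) :
    0 ≤ (2 + z) * Real.exp (-z) + z - 2 := by
  have hmono : MonotoneOn (fun z : ℝ => (2 + z) * Real.exp (-z) + z - 2) (Ici (0:ℝ)) := by
    have hd : ∀ x : ℝ, HasDerivAt (fun z : ℝ => (2 + z) * Real.exp (-z) + z - 2)
        (1 * Real.exp (-x) + (2 + x) * -Real.exp (-x) + 1) x := by
      intro x
      have h1 : HasDerivAt (fun z : ℝ => Real.exp (-z)) (-Real.exp (-x)) x := by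
        exact ((Real.hasDerivAt_exp (-x)).comp x (hasDerivAt_neg x)).congr_deriv (by ring)
      have h2 := (((hasDerivAt_id x).const_add 2).mul h1).add (hasDerivAt_id x) |>.sub_const 2
      simpa using h2
    apply monotoneOn_of_deriv_nonneg (convex_Ici 0)
      (Continuous.continuousOn (by continuity))
    · intro x _
      exact (hd x).differentiableAt.differentiableWithinAt
    · intro x hx
      rw [interior_Ici] at hx
      have hx0 : (0:ℝ) < x := hx
      rw [(hd x).deriv]
      have key : (1 + x) * Real.exp (-x) ≤ 1 := by
        have h := Real.add_one_le_exp x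
        have hep := Real.exp_pos x
        rw [Real.exp_neg, mul_inv_le_iff₀ hep]
        linarith
      nlinarith [Real.exp_pos (-x)]
  have h := hmono self_mem_Ici (mem_Ici.mpr hz) hz
  simpa using h

private lemma Hanti : AntitoneOn (fun z => (Real.exp (-z) - 1 + z) / z ^ 2) (Ioi (0:ℝ)) := by
  apply antitoneOn_of_deriv_nonpos (convex_Ioi 0)
  · apply ContinuousOn.div Hcont.continuousOn (by fun_prop)
    intro x hx
    exact pow_ne_zero 2 (ne_of_gt (mem_Ioi.mp hx))
  · intro x hx
    rw [interior_Ioi] at hx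
    have hx0 : (0:ℝ) < x := hx
    exact ((Hderiv x).div (hasDerivAt_pow 2 x)
      (pow_ne_zero 2 hx0.ne')).differentiableAt.differentiableWithinAt
  · intro x hx
    rw [interior_Ioi] at hx
    have hx0 : (0:ℝ) < x := hx
    have hd := (Hderiv x).div (hasDerivAt_pow 2 x) (pow_ne_zero 2 hx0.ne')
    rw [(show HasDerivAt (fun z => (Real.exp (-z) - 1 + z) / z ^ 2) _ x from hd).deriv]
    apply div_nonpos_of_nonpos_of_nonneg
    · have hphi := phi_nonneg x hx0.le
      have h2 : x * (1 - Real.exp (-x)) ≤ 2 * (Real.exp (-x) - 1 + x) := by nlinarith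
      have hnum : (1 - Real.exp (-x)) * x ^ 2 - (Real.exp (-x) - 1 + x) * (2 * x ^ 1) ≤ 0 := by
        nlinarith
      simpa using hnum
    · positivity

private lemma Hkey (a b : ℝ) (ha : 0 ≤ a) (hab : a ≤ b) :
    a ^ 2 * (Real.exp (-b) - 1 + b) ≤ b ^ 2 * (Real.exp (-a) - 1 + a) := by
  rcases eq_or_lt_of_le ha with h | h
  · rw [← h]
    norm_num
  · have hb : (0:ℝ) < b := lt_of_lt_of_le h hab
    have hanti := Hanti (mem_Ioi.mpr h) (mem_Ioi.mpr hb) hab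
    rw [div_le_div_iff₀ (by positivity) (by positivity)] at hanti
    linarith

theorem stmt_0 (H : ℝ → ℝ) (hH : ∀ z, H z = Real.exp (-z) - 1 + z) :
    ConvexOn ℝ (Set.Ici (0:ℝ)) H ∧ StrictMonoOn H (Set.Ioi (0:ℝ)) ∧
    ∀ z ≥ (0:ℝ), ∀ t > (0:ℝ),
      min 1 (t ^ 2) * H z ≤ H (t * z) ∧ H (t * z) ≤ max 1 (t ^ 2) * H z := by
  have hfun : H = fun z => Real.exp (-z) - 1 + z := funext hH
  subst hfun
  refine ⟨?_, ?_, ?_⟩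
  · -- convexity
    have cexp : ConvexOn ℝ (Ici (0:ℝ)) (fun z : ℝ => Real.exp (-z)) := by
      refine ⟨convex_Ici 0, ?_⟩
      intro x _ y _ a b ha hb hab
      have h := convexOn_exp.2 (mem_univ (-x)) (mem_univ (-y)) ha hb hab
      simp only [smul_eq_mul] at h ⊢
      have harg : -(a * x + b * y) = a * -x + b * -y := by ring
      rw [harg]
      exact h
    have cid : ConvexOn ℝ (Ici (0:ℝ)) (fun z : ℝ => z - 1) := by
      refine ⟨convex_Ici 0, ?_⟩
      intro x _ y _ a b _ _ hab
      simp only [smul_eq_mul]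
      nlinarith
    have hadd := cexp.add cid
    convert hadd using 1
    · rfl
    funext z
    simp only [Pi.add_apply]
    ring
  · -- strict mono
    apply strictMonoOn_of_deriv_pos (convex_Ioi 0) Hcont.continuousOn
    intro x hx
    rw [interior_Ioi] at hx
    rw [(Hderiv x).deriv]
    have : Real.exp (-x) < 1 := by
      rw [Real.exp_lt_one_iff]; linarith [mem_Ioi.mp hx]
    linarith
  · intro z hz t ht
    have htz : (0:ℝ) ≤ t * z := by positivity
    rcases le_or_gt t 1 with htle | htgt
    · have ht2 : t ^ 2 ≤ 1 := by nlinarith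
      rw [min_eq_right ht2, max_eq_left ht2]
      constructor
      · have hk := Hkey (t * z) z htz (by nlinarith)
        rcases eq_or_lt_of_le hz with h | h
        · simp [← h]
        · have hz2 : (0:ℝ) < z ^ 2 := by positivity
          rw [mul_pow] at hk
          show t ^ 2 * (Real.exp (-z) - 1 + z) ≤ Real.exp (-(t * z)) - 1 + t * z
          nlinarith
      · have h := Hmono (mem_Ici.mpr htz) (mem_Ici.mpr hz) (by nlinarith : t * z ≤ z)
        simpa using h
    · have ht2 : 1 ≤ t ^ 2 := by nlinarith
      rw [min_eq_left ht2, max_eq_right ht2]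
      constructor
      · have h := Hmono (mem_Ici.mpr hz) (mem_Ici.mpr htz) (by nlinarith : z ≤ t * z)
        simpa using h
      · have hk := Hkey z (t * z) hz (by nlinarith)
        rcases eq_or_lt_of_le hz with h | h
        · simp [← h]
        · have hz2 : (0:ℝ) < z ^ 2 := by positivity
          rw [mul_pow] at hk
          show Real.exp (-(t * z)) - 1 + t * z ≤ t ^ 2 * (Real.exp (-z) - 1 + z)
          nlinarith
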